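/- arXiv:1004.4398 — 6 statements merged into one kernel-verified Lean document; each statement's English description precedes it below -/
import Mathlib

section
/- Let A be an m×n real matrix with m < n, and let B = A·X for some X ∈ ℝ^{n×r} with ‖X‖₀ = |supp X| = k (supp X is the set of nonzero rows of X). If ‖X‖₀ < (spark(A) + rank(B) - 1)/2, then X is the unique solution of the minimization of ‖Z‖₀ subject to A·Z = B. -/
open Matrix

/-- Set of indices of nonzero rows of `X`. -/
noncomputable def rowSupp {n r : ℕ} (X : Matrix (Fin n) (Fin r) ℝ) : Finset (Fin n) :=
  @Finset.filter _ (fun i => X i ≠ 0) (Classical.decPred _) Finset.univ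

/-- The spark of `A`: smallest number of linearly dependent columns of `A`. -/
noncomputable def spark {m n : ℕ} (A : Matrix (Fin m) (Fin n) ℝ) : ℕ :=
  sInf {s | ∃ S : Finset (Fin n), S.card = s ∧
    ¬ LinearIndependent ℝ (fun j : {j // j ∈ S} => (fun i => A i j.1))}

lemma mem_rowSupp {n r : ℕ} {X : Matrix (Fin n) (Fin r) ℝ} {i : Fin n} :
    i ∈ rowSupp X ↔ X i ≠ 0 := by
  unfold rowSupp
  rw [@Finset.mem_filter _ _ (Classical.decPred _)]
  simp

lemma spark_le_of_null {m n : ℕ} (A : Matrix (Fin m) (Fin n) ℝ) (v : Fin n → ℝ)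
    (hv : v ≠ 0) (hAv : A *ᵥ v = 0) (S : Finset (Fin n)) (hS : ∀ j, v j ≠ 0 → j ∈ S) :
    spark A ≤ S.card := by
  apply Nat.sInf_le
  refine ⟨S, rfl, ?_⟩
  rw [Fintype.not_linearIndependent_iff]
  refine ⟨fun j => v j.1, ?_, ?_⟩
  · funext i
    simp only [Finset.sum_apply, Pi.smul_apply, smul_eq_mul, Pi.zero_apply]
    rw [Finset.sum_coe_sort S (fun j => v j * A i j)]
    rw [Finset.sum_subset (Finset.subset_univ S) (by
      intro x _ hx
      have : v x = 0 := by
        by_contra h; exact hx (hS x h)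
      rw [this, zero_mul])]
    simpa [mulVec, dotProduct, mul_comm] using congrFun hAv i
  · obtain ⟨j, hj⟩ : ∃ j, v j ≠ 0 := by
      by_contra h; push_neg at h; exact hv (funext h)
    exact ⟨⟨j, hS j hj⟩, hj⟩

lemma row_zero_of_mem_range {n r : ℕ} {W : Matrix (Fin n) (Fin r) ℝ} {v : Fin n → ℝ}
    (hv : v ∈ LinearMap.range W.mulVecLin) {i : Fin n} (hi : W i = 0) : v i = 0 := by
  obtain ⟨u, rfl⟩ := hv
  simp only [mulVecLin_apply, mulVec, dotProduct]
  have : ∀ j, W i j = 0 := fun j => congrFun hi j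
  simp [this]

lemma rank_le_card_rowSupp {n r : ℕ} (X : Matrix (Fin n) (Fin r) ℝ) :
    X.rank ≤ (rowSupp X).card := by
  classical
  rw [← X.rank_transpose, Matrix.rank, Matrix.range_mulVecLin, Matrix.col, transpose_transpose]
  have hsub : Set.range X ⊆ insert 0 (((rowSupp X).image (fun i => X i) : Finset (Fin r → ℝ)) : Set (Fin r → ℝ)) := by
    rintro w ⟨i, rfl⟩
    by_cases h : X i = 0
    · rw [h]; exact Set.mem_insert _ _
    · exact Set.mem_insert_of_mem _ (by
        simp only [Finset.coe_image, Set.mem_image, Finset.mem_coe]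
        exact ⟨i, mem_rowSupp.mpr h, rfl⟩)
  calc Module.finrank ℝ (Submodule.span ℝ (Set.range X))
      ≤ Module.finrank ℝ (Submodule.span ℝ (insert 0 (((rowSupp X).image (fun i => X i) : Finset (Fin r → ℝ)) : Set (Fin r → ℝ)))) :=
        Submodule.finrank_mono (Submodule.span_mono hsub)
    _ = Module.finrank ℝ (Submodule.span ℝ (((rowSupp X).image (fun i => X i) : Finset (Fin r → ℝ)) : Set (Fin r → ℝ))) := by
        rw [Submodule.span_insert_zero]
    _ ≤ ((rowSupp X).image (fun i => X i)).card := finrank_span_finset_le_card _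
    _ ≤ (rowSupp X).card := Finset.card_image_le

lemma rank_add_le' {n r : ℕ} (M N : Matrix (Fin n) (Fin r) ℝ) :
    (M + N).rank ≤ M.rank + N.rank := by
  have hle : LinearMap.range (M + N).mulVecLin ≤
      LinearMap.range M.mulVecLin ⊔ LinearMap.range N.mulVecLin := by
    rw [mulVecLin_add]
    rintro x ⟨u, rfl⟩
    exact Submodule.add_mem_sup ⟨u, rfl⟩ ⟨u, rfl⟩
  exact (Submodule.finrank_mono hle).trans
    (Submodule.finrank_add_le_finrank_add_finrank _ _)

lemma spark_key {m n r : ℕ} (A : Matrix (Fin m) (Fin n) ℝ) (W : Matrix (Fin n) (Fin r) ℝ)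
    (hW : W ≠ 0) (hAW : A * W = 0) : spark A + W.rank ≤ (rowSupp W).card + 1 := by
  classical
  have hfr : Module.finrank ℝ (LinearMap.range W.mulVecLin) = W.rank := rfl
  have hρ1 : 1 ≤ W.rank := by
    by_contra h
    push_neg at h
    have h0 : Module.finrank ℝ (LinearMap.range W.mulVecLin) = 0 := by omega
    have hbot : LinearMap.range W.mulVecLin = ⊥ := Submodule.finrank_eq_zero.mp h0
    apply hW
    ext i j
    have hmem : W *ᵥ Pi.single j 1 ∈ LinearMap.range W.mulVecLin := ⟨Pi.single j 1, rfl⟩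
    rw [hbot, Submodule.mem_bot] at hmem
    have := congrFun hmem i
    simpa [mulVec_single] using this
  have hρt : W.rank ≤ (rowSupp W).card := rank_le_card_rowSupp W
  obtain ⟨R, hRsub, hRcard⟩ :=
    Finset.exists_subset_card_eq (show W.rank - 1 ≤ (rowSupp W).card by omega)
  let V := LinearMap.range W.mulVecLin
  let φ : V →ₗ[ℝ] ({j // j ∈ R} → ℝ) := LinearMap.pi (fun j => (LinearMap.proj j.1).comp V.subtype)
  obtain ⟨x, hxker, hxne⟩ : ∃ x : V, φ x = 0 ∧ x ≠ 0 := by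
    have h1 := LinearMap.finrank_range_add_finrank_ker φ
    have h2 : Module.finrank ℝ (LinearMap.range φ) ≤ W.rank - 1 := by
      have h3 := Submodule.finrank_le (LinearMap.range φ)
      have h4 : Module.finrank ℝ ({j // j ∈ R} → ℝ) = W.rank - 1 := by
        rw [Module.finrank_pi, Fintype.card_coe, hRcard]
      omega
    have hkerpos : 0 < Module.finrank ℝ (LinearMap.ker φ) := by
      rw [hfr] at h1; omega
    have hkerne : LinearMap.ker φ ≠ ⊥ := by
      intro hbot
      rw [hbot, finrank_bot] at hkerpos
      omega
    obtain ⟨x, hx, hxne⟩ := (Submodule.ne_bot_iff _).mp hkerne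
    exact ⟨x, hx, hxne⟩
  have hv0 : (x : Fin n → ℝ) ≠ 0 := by
    intro h
    exact hxne (Subtype.ext h)
  have hAv : A *ᵥ (x : Fin n → ℝ) = 0 := by
    obtain ⟨u, hu⟩ := x.2
    rw [← hu, mulVecLin_apply, mulVec_mulVec, hAW, zero_mulVec]
  have hsupp : ∀ j, (x : Fin n → ℝ) j ≠ 0 → j ∈ rowSupp W \ R := by
    intro j hj
    rw [Finset.mem_sdiff]
    refine ⟨mem_rowSupp.mpr fun h0 => hj (row_zero_of_mem_range x.2 h0), fun hjR => ?_⟩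
    exact hj (congrFun hxker ⟨j, hjR⟩)
  have hsp := spark_le_of_null A _ hv0 hAv _ hsupp
  rw [Finset.card_sdiff_of_subset hRsub, hRcard] at hsp
  omega

theorem stmt0 {m n r k : ℕ} (hmn : m < n)
    (A : Matrix (Fin m) (Fin n) ℝ) (X : Matrix (Fin n) (Fin r) ℝ)
    (B : Matrix (Fin m) (Fin r) ℝ) (hB : B = A * X)
    (hk : (rowSupp X).card = k)
    (hbound : (k : ℝ) < ((spark A : ℝ) + (B.rank : ℝ) - 1) / 2) :
    ∀ Z : Matrix (Fin n) (Fin r) ℝ, A * Z = B → (rowSupp Z).card ≤ k → Z = X := by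
  classical
  intro Z hZ hkZ
  by_contra hne
  set W := Z - X with hWdef
  have hWne : W ≠ 0 := sub_ne_zero.mpr hne
  have hAW : A * W = 0 := by
    rw [hWdef, Matrix.mul_sub, hZ, ← hB, sub_self]
  have F1 := spark_key A W hWne hAW
  set P := rowSupp X \ rowSupp Z with hP
  set d : Fin n → ℝ := fun i => if i ∈ P then 1 else 0 with hd
  have hDXW : Matrix.diagonal d * X = Matrix.diagonal (fun i => -d i) * W := by
    ext i j
    rw [diagonal_mul, diagonal_mul]
    by_cases hiP : i ∈ P
    · have hZ0 : Z i = 0 := by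
        have hniZ : i ∉ rowSupp Z := (Finset.mem_sdiff.mp hiP).2
        by_contra h
        exact hniZ (mem_rowSupp.mpr h)
      have hZij : Z i j = 0 := congrFun hZ0 j
      simp only [hd, if_pos hiP, hWdef, Matrix.sub_apply, hZij]
      ring
    · simp [hd, if_neg hiP]
  have h1 : (Matrix.diagonal d * X).rank ≤ W.rank := by
    rw [hDXW]; exact rank_mul_le_right _ _
  have h2 : (X - Matrix.diagonal d * X).rank ≤ (rowSupp X ∩ rowSupp Z).card := by
    refine le_trans (rank_le_card_rowSupp _) (Finset.card_le_card ?_)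
    intro i hi
    rw [mem_rowSupp] at hi
    rw [Finset.mem_inter]
    by_cases hiP : i ∈ P
    · exfalso
      apply hi
      funext j
      simp [Matrix.sub_apply, diagonal_mul, hd, if_pos hiP]
    · have hXi : X i ≠ 0 := by
        intro h0
        apply hi
        funext j
        simp [Matrix.sub_apply, diagonal_mul, hd, if_neg hiP, congrFun h0 j]
      refine ⟨mem_rowSupp.mpr hXi, ?_⟩
      by_contra hiZ
      exact hiP (Finset.mem_sdiff.mpr ⟨mem_rowSupp.mpr hXi, hiZ⟩)
  have F2 : B.rank ≤ W.rank + (rowSupp X ∩ rowSupp Z).card := by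
    calc B.rank ≤ X.rank := by rw [hB]; exact rank_mul_le_right _ _
      _ = (Matrix.diagonal d * X + (X - Matrix.diagonal d * X)).rank := by
          rw [add_sub_cancel]
      _ ≤ (Matrix.diagonal d * X).rank + (X - Matrix.diagonal d * X).rank := rank_add_le' _ _
      _ ≤ W.rank + (rowSupp X ∩ rowSupp Z).card := add_le_add h1 h2
  have F3 : (rowSupp W).card + (rowSupp X ∩ rowSupp Z).card ≤ 2 * k := by
    have hsub : rowSupp W ⊆ rowSupp X ∪ rowSupp Z := by
      intro i hi
      rw [mem_rowSupp] at hi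
      rw [Finset.mem_union, mem_rowSupp, mem_rowSupp]
      by_contra h
      push_neg at h
      apply hi
      funext j
      simp [hWdef, Matrix.sub_apply, congrFun h.1 j, congrFun h.2 j]
    have hcui := Finset.card_union_add_card_inter (rowSupp X) (rowSupp Z)
    have hcard := Finset.card_le_card hsub
    omega
  have h2k : 2 * k + 2 ≤ spark A + B.rank := by
    have h' : (2 * k : ℝ) + 1 < (spark A : ℝ) + (B.rank : ℝ) := by linarith
    have h'' : 2 * k + 1 < spark A + B.rank := by exact_mod_cast h'
    omega
  omega
end

section
/- Under the canonical MMV assumptions with I ⊂ supp X, |I| = k - r, and rank(Qᵀ·A_I) = k - r, for any j ∉ I the condition rank(Qᵀ·[A_I, a_j]) = k - r is equivalent to a_jᵀ·[P_{R(Q)} − P_{R(P_{R(Q)}·A_I)}]·a_j = 0, where P_W denotes the orthogonal projection onto a subspace W and R(M) the column space of M. -/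
open Matrix

private lemma isUnit_det_of_rank_eq_card {κ : Type*} [Fintype κ] [DecidableEq κ]
    (H : Matrix κ κ ℝ) (h : H.rank = Fintype.card κ) : IsUnit H.det := by
  have htop : LinearMap.range H.mulVecLin = ⊤ := by
    apply Submodule.eq_top_of_finrank_eq
    rw [← Matrix.rank, h, Module.finrank_pi]
  have hsurj : Function.Surjective H.mulVecLin :=
    LinearMap.range_eq_top.mp htop
  have hinj : Function.Injective H.mulVecLin :=
    (LinearMap.injective_iff_surjective).mpr hsurj
  rw [isUnit_iff_ne_zero]
  intro hdet
  obtain ⟨w, hw, hw0⟩ := (Matrix.exists_mulVec_eq_zero_iff).mpr hdet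
  exact hw (hinj (by simpa using hw0))

private lemma quad_iff_mem {ι κ : Type*} [Fintype ι] [Fintype κ] [DecidableEq κ]
    (M : Matrix ι κ ℝ) (v : ι → ℝ) (hG : IsUnit (Mᵀ * M).det) :
    v ⬝ᵥ v - v ⬝ᵥ (M * (Mᵀ * M)⁻¹ * Mᵀ).mulVec v = 0 ↔
      v ∈ LinearMap.range M.mulVecLin := by
  set u : κ → ℝ := ((Mᵀ * M)⁻¹ * Mᵀ).mulVec v with hu
  have hMu : (M * (Mᵀ * M)⁻¹ * Mᵀ).mulVec v = M.mulVec u := by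
    rw [hu, mulVec_mulVec, Matrix.mul_assoc]
  have hGu : (Mᵀ * M).mulVec u = Mᵀ.mulVec v := by
    rw [hu, mulVec_mulVec, ← Matrix.mul_assoc, Matrix.mul_nonsing_inv _ hG, Matrix.one_mul]
  have hdp : ∀ (a : ι → ℝ) (b : κ → ℝ), a ⬝ᵥ M.mulVec b = Mᵀ.mulVec a ⬝ᵥ b := by
    intro a b
    rw [dotProduct_mulVec, ← Matrix.mulVec_transpose]
  have h1 : M.mulVec u ⬝ᵥ M.mulVec u = v ⬝ᵥ M.mulVec u := by
    rw [hdp, mulVec_mulVec, hGu, ← hdp]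
  have key : v ⬝ᵥ v - v ⬝ᵥ (M * (Mᵀ * M)⁻¹ * Mᵀ).mulVec v
      = (v - M.mulVec u) ⬝ᵥ (v - M.mulVec u) := by
    rw [hMu, sub_dotProduct, dotProduct_sub, dotProduct_sub, h1,
      dotProduct_comm (M.mulVec u) v]
    ring
  rw [key, dotProduct_self_eq_zero, sub_eq_zero]
  constructor
  · intro h; exact ⟨u, h.symm⟩
  · rintro ⟨x, rfl⟩
    have : u = x := by
      rw [hu, Matrix.mulVecLin_apply, mulVec_mulVec, Matrix.mul_assoc,
        Matrix.nonsing_inv_mul _ hG, Matrix.one_mulVec]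
    rw [this, Matrix.mulVecLin_apply]

private lemma rank_aug_iff {ι κ : Type*} [Fintype ι] [Fintype κ]
    (M : Matrix ι κ ℝ) (v : ι → ℝ) (N : Matrix ι (κ ⊕ Unit) ℝ)
    (hN1 : ∀ x i, N x (Sum.inl i) = M x i) (hN2 : ∀ x, N x (Sum.inr ()) = v x) :
    (N.rank = M.rank ↔ v ∈ LinearMap.range M.mulVecLin) := by
  have hrange : LinearMap.range N.mulVecLin
      = LinearMap.range M.mulVecLin ⊔ Submodule.span ℝ {v} := by
    apply le_antisymm
    · rintro y ⟨x, rfl⟩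
      have hx : N.mulVecLin x = M.mulVec (x ∘ Sum.inl) + (x (Sum.inr ())) • v := by
        ext i
        simp [Matrix.mulVecLin_apply, Matrix.mulVec, dotProduct, Fintype.sum_sum_type,
          hN1, hN2, mul_comm]
      rw [hx]
      exact Submodule.add_mem _ (Submodule.mem_sup_left ⟨_, rfl⟩)
        (Submodule.mem_sup_right (Submodule.smul_mem _ _ (Submodule.subset_span rfl)))
    · apply sup_le
      · rintro y ⟨x, rfl⟩
        refine ⟨Sum.elim x 0, ?_⟩
        ext i
        simp [Matrix.mulVecLin_apply, Matrix.mulVec, dotProduct, Fintype.sum_sum_type,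
          hN1, hN2]
      · rw [Submodule.span_le, Set.singleton_subset_iff]
        refine ⟨Sum.elim 0 (fun _ => 1), ?_⟩
        ext i
        simp [Matrix.mulVecLin_apply, Matrix.mulVec, dotProduct, Fintype.sum_sum_type,
          hN1, hN2]
  have hvmem : v ∈ Submodule.span ℝ ({v} : Set (ι → ℝ)) := Submodule.subset_span rfl
  rw [Matrix.rank, Matrix.rank, hrange]
  constructor
  · intro h
    have hle : LinearMap.range M.mulVecLin ≤ LinearMap.range M.mulVecLin ⊔ Submodule.span ℝ {v} :=
      le_sup_left
    have heq := Submodule.eq_of_le_of_finrank_le hle (le_of_eq h)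
    rw [heq]
    exact Submodule.mem_sup_right hvmem
  · intro h
    have : Submodule.span ℝ ({v} : Set (ι → ℝ)) ≤ LinearMap.range M.mulVecLin := by
      rw [Submodule.span_le, Set.singleton_subset_iff]; exact h
    rw [sup_of_le_left this]

/-- The rank form of the generalized MUSIC criterion is equivalent to the
projection (quadratic-form) form. -/
theorem stmt7 {m n r k : ℕ} (hrm : r ≤ m) (hmn : m < n) (hrk : r ≤ k)
    (A : Matrix (Fin m) (Fin n) ℝ) (X : Matrix (Fin n) (Fin r) ℝ)
    (B : Matrix (Fin m) (Fin r) ℝ) (hB : B = A * X)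
    (hk : (rowSupp X).card = k) (hrank : B.rank = r)
    (hgenrows : ∀ Z : Finset (Fin n), Z ⊆ rowSupp X → Z.card = r →
      LinearIndependent ℝ (fun i : {i // i ∈ Z} => X i.1))
    (hA : ∀ S : Finset (Fin n), S.card = 2 * k - r + 1 →
      LinearIndependent ℝ (fun j : {j // j ∈ S} => (fun i => A i j.1)))
    (Q : Matrix (Fin m) (Fin (m - r)) ℝ) (hQ : Qᵀ * Q = 1) (hQB : Qᵀ * B = 0)
    (I : Finset (Fin n)) (hI : I ⊆ rowSupp X) (hIcard : I.card = k - r)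
    (AI : Matrix (Fin m) {i // i ∈ I} ℝ) (hAI : AI = Matrix.of (fun x i => A x i.1))
    (hrankAI : (Qᵀ * AI).rank = k - r) :
    ∀ j : Fin n, j ∉ I →
      ((Qᵀ * Matrix.of (fun x c =>
          Sum.elim (fun i : {i // i ∈ I} => A x i.1) (fun _ : Unit => A x j) c)).rank = k - r
        ↔ (fun i => A i j) ⬝ᵥ
            ((Q * Qᵀ -
              (Q * Qᵀ * AI) * (AIᵀ * (Q * Qᵀ) * AI)⁻¹ * (AIᵀ * (Q * Qᵀ))).mulVec
              (fun i => A i j)) = 0) := by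
  intro j hj
  set a : Fin m → ℝ := fun i => A i j with ha
  set M : Matrix (Fin (m - r)) {i // i ∈ I} ℝ := Qᵀ * AI with hM
  set v : Fin (m - r) → ℝ := Qᵀ.mulVec a with hv
  set N : Matrix (Fin (m - r)) ({i // i ∈ I} ⊕ Unit) ℝ :=
    Qᵀ * Matrix.of (fun x c =>
      Sum.elim (fun i : {i // i ∈ I} => A x i.1) (fun _ : Unit => A x j) c) with hN
  -- invertibility of the Gram matrix
  have hcard : Fintype.card {i // i ∈ I} = k - r := by
    rw [Fintype.card_coe, hIcard]
  have hGunit : IsUnit (Mᵀ * M).det := by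
    apply isUnit_det_of_rank_eq_card
    rw [Matrix.rank_transpose_mul_self, ← hM] at *
    rw [hrankAI, hcard]
  -- identities
  have hMt : Mᵀ = AIᵀ * Q := by
    rw [hM, Matrix.transpose_mul, Matrix.transpose_transpose]
  have h1 : Q * Qᵀ * AI = Q * M := by rw [hM, Matrix.mul_assoc]
  have h2 : AIᵀ * (Q * Qᵀ) = Mᵀ * Qᵀ := by rw [hMt, Matrix.mul_assoc]
  have hG' : AIᵀ * (Q * Qᵀ) * AI = Mᵀ * M := by
    rw [h2, Matrix.mul_assoc, ← hM]
  -- rewrite the quadratic form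
  have hE : Q * Qᵀ - (Q * Qᵀ * AI) * (AIᵀ * (Q * Qᵀ) * AI)⁻¹ * (AIᵀ * (Q * Qᵀ))
      = Q * (1 - M * (Mᵀ * M)⁻¹ * Mᵀ) * Qᵀ := by
    rw [hG', h1, h2]
    simp only [Matrix.mul_sub, Matrix.sub_mul, Matrix.mul_one, Matrix.mul_assoc]
  have hquad : a ⬝ᵥ ((Q * Qᵀ -
      (Q * Qᵀ * AI) * (AIᵀ * (Q * Qᵀ) * AI)⁻¹ * (AIᵀ * (Q * Qᵀ))).mulVec a)
      = v ⬝ᵥ v - v ⬝ᵥ (M * (Mᵀ * M)⁻¹ * Mᵀ).mulVec v := by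
    rw [hE, ← Matrix.mulVec_mulVec, ← Matrix.mulVec_mulVec, Matrix.dotProduct_mulVec,
      ← Matrix.mulVec_transpose, ← hv, Matrix.sub_mulVec, Matrix.one_mulVec,
      dotProduct_sub]
  -- the augmented matrix
  have hN1 : ∀ x i, N x (Sum.inl i) = M x i := by
    intro x i
    simp [hN, hM, hAI, Matrix.mul_apply]
  have hN2 : ∀ x, N x (Sum.inr ()) = v x := by
    intro x
    simp [hN, hv, Matrix.mul_apply, Matrix.mulVec, dotProduct, ha]
  have hrk := rank_aug_iff M v N hN1 hN2
  rw [hrankAI] at hrk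
  rw [hrk, hquad, quad_iff_mem M v hGunit]
end

section
/- Let U ∈ ℝ^{m×r} and Q ∈ ℝ^{m×(m-r)} have orthonormal columns with Uᵀ·Q = 0, and let G ∈ ℝ^{m×s} be such that Qᵀ·G has full column rank. Then Q·Qᵀ − P_{R(Q·Qᵀ·G)} equals the orthogonal projection onto R(Q) ∩ R(Q·Qᵀ·G)^⊥, which is the orthogonal complement of R([U, G]) = R(U) + R(G). -/
open Matrix

section helpers

variable {a b : ℕ}

lemma mem_range_toEL (M : Matrix (Fin a) (Fin b) ℝ) (x : EuclideanSpace ℝ (Fin a)) :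
    x ∈ LinearMap.range (Matrix.toEuclideanLin M) ↔ ∃ y : Fin b → ℝ, M *ᵥ y = x := by
  constructor
  · rintro ⟨y, rfl⟩
    exact ⟨y, rfl⟩
  · rintro ⟨y, h⟩
    exact ⟨(WithLp.equiv 2 (Fin b → ℝ)).symm y, by ext i; simp [Matrix.toEuclideanLin_apply, ← h]⟩

lemma inner_eq_dot (u x : EuclideanSpace ℝ (Fin a)) :
    (inner ℝ u x : ℝ) = (u : Fin a → ℝ) ⬝ᵥ (x : Fin a → ℝ) := by
  simp [PiLp.inner_apply, dotProduct, mul_comm]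

lemma mem_orth_range_toEL (M : Matrix (Fin a) (Fin b) ℝ) (x : EuclideanSpace ℝ (Fin a)) :
    x ∈ (LinearMap.range (Matrix.toEuclideanLin M))ᗮ ↔ Mᵀ *ᵥ (x : Fin a → ℝ) = 0 := by
  rw [Submodule.mem_orthogonal]
  constructor
  · intro h
    funext j
    have := h (Matrix.toEuclideanLin M ((WithLp.equiv 2 (Fin b → ℝ)).symm (Pi.single j 1)))
      ⟨_, rfl⟩
    rw [inner_eq_dot] at this
    simpa [Matrix.toEuclideanLin_apply, Matrix.mulVec, dotProduct, Pi.single_apply,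
      Matrix.transpose_apply, mul_comm] using this
  · intro h u hu
    rw [mem_range_toEL] at hu
    obtain ⟨y, hy⟩ := hu
    rw [inner_eq_dot, ← hy, dotProduct_comm, Matrix.dotProduct_mulVec,
      ← Matrix.mulVec_transpose, h, zero_dotProduct]

lemma finrank_range_toEL (M : Matrix (Fin a) (Fin b) ℝ) :
    Module.finrank ℝ (LinearMap.range (Matrix.toEuclideanLin M)) = M.rank := by
  rw [Matrix.rank_eq_finrank_range_toLin M (PiLp.basisFun 2 ℝ (Fin a)) (PiLp.basisFun 2 ℝ (Fin b))]
  rfl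

end helpers

theorem stmt9 {m r s : ℕ}
    (U : Matrix (Fin m) (Fin r) ℝ) (Q : Matrix (Fin m) (Fin (m - r)) ℝ)
    (G : Matrix (Fin m) (Fin s) ℝ)
    (hU : Uᵀ * U = 1) (hQ : Qᵀ * Q = 1) (hUQ : Uᵀ * Q = 0)
    (hG : (Qᵀ * G).rank = s)
    (P : Matrix (Fin m) (Fin m) ℝ)
    (hP : P = Q * Qᵀ - (Q * Qᵀ * G) * (Gᵀ * (Q * Qᵀ) * G)⁻¹ * (Gᵀ * (Q * Qᵀ))) :
    P.IsSymm ∧ P * P = P ∧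
      LinearMap.range (Matrix.toEuclideanLin P) =
        LinearMap.range (Matrix.toEuclideanLin Q) ⊓
          (LinearMap.range (Matrix.toEuclideanLin (Q * Qᵀ * G)))ᗮ ∧
      LinearMap.range (Matrix.toEuclideanLin Q) ⊓
          (LinearMap.range (Matrix.toEuclideanLin (Q * Qᵀ * G)))ᗮ =
        (LinearMap.range (Matrix.toEuclideanLin U) ⊔
          LinearMap.range (Matrix.toEuclideanLin G))ᗮ := by
  -- invertibility of B = Gᵀ * (Q * Qᵀ) * G
  have hBeq : Gᵀ * (Q * Qᵀ) * G = (Qᵀ * G)ᵀ * (Qᵀ * G) := by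
    simp [Matrix.transpose_mul, Matrix.mul_assoc]
  have hRB : (Gᵀ * (Q * Qᵀ) * G).rank = s := by
    rw [hBeq, Matrix.rank_transpose_mul_self, hG]
  have hBunit : IsUnit (Gᵀ * (Q * Qᵀ) * G) := by
    rw [← Matrix.mulVec_injective_iff_isUnit]
    have hsurj : Function.Surjective (Gᵀ * (Q * Qᵀ) * G).mulVecLin := by
      rw [← LinearMap.range_eq_top]
      apply Submodule.eq_top_of_finrank_eq
      rw [← Matrix.rank, hRB]
      simp
    have := (LinearMap.injective_iff_surjective
      (f := (Gᵀ * (Q * Qᵀ) * G).mulVecLin)).2 hsurj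
    exact this
  have hBdet : IsUnit (Gᵀ * (Q * Qᵀ) * G).det :=
    (Matrix.isUnit_iff_isUnit_det _).1 hBunit
  have hB1 : (Gᵀ * (Q * Qᵀ) * G)⁻¹ * (Gᵀ * (Q * Qᵀ) * G) = 1 :=
    Matrix.nonsing_inv_mul _ hBdet
  have hB2 : (Gᵀ * (Q * Qᵀ) * G) * (Gᵀ * (Q * Qᵀ) * G)⁻¹ = 1 :=
    Matrix.mul_nonsing_inv _ hBdet
  -- rewriting helpers
  have h1 : ∀ {k : ℕ} (X : Matrix (Fin (m - r)) (Fin k) ℝ), Qᵀ * (Q * X) = X := by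
    intro k X; rw [← Matrix.mul_assoc, hQ, Matrix.one_mul]
  have hBassoc : Gᵀ * (Q * (Qᵀ * G)) = Gᵀ * (Q * Qᵀ) * G := by
    simp [Matrix.mul_assoc]
  have h3 : ∀ {k : ℕ} (X : Matrix (Fin s) (Fin k) ℝ),
      Gᵀ * (Q * (Qᵀ * (G * ((Gᵀ * (Q * (Qᵀ * G)))⁻¹ * X)))) = X := by
    intro k X
    calc Gᵀ * (Q * (Qᵀ * (G * ((Gᵀ * (Q * (Qᵀ * G)))⁻¹ * X))))
        = (Gᵀ * (Q * Qᵀ) * G) * ((Gᵀ * (Q * Qᵀ) * G)⁻¹ * X) := by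
          rw [hBassoc]; simp [Matrix.mul_assoc]
      _ = X := by rw [← Matrix.mul_assoc, hB2, Matrix.one_mul]
  have hsym : P.IsSymm := by
    unfold Matrix.IsSymm
    rw [hP]
    simp [Matrix.transpose_sub, Matrix.transpose_mul, Matrix.transpose_transpose,
      Matrix.transpose_nonsing_inv, Matrix.mul_assoc]
  have hPP : P * P = P := by
    rw [hP]
    simp only [Matrix.sub_mul, Matrix.mul_sub, Matrix.mul_assoc, h1, h3, sub_self, sub_zero]
  -- key matrix identities
  have hQQG_T : (Q * Qᵀ * G)ᵀ = Gᵀ * (Q * Qᵀ) := by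
    simp [Matrix.transpose_mul, Matrix.mul_assoc]
  have hGQQP : (Gᵀ * (Q * Qᵀ)) * P = 0 := by
    rw [hP]
    simp only [Matrix.mul_sub, Matrix.mul_assoc, h1, h3, sub_self]
  -- claim 3
  have hC3 : LinearMap.range (Matrix.toEuclideanLin P) =
      LinearMap.range (Matrix.toEuclideanLin Q) ⊓
        (LinearMap.range (Matrix.toEuclideanLin (Q * Qᵀ * G)))ᗮ := by
    ext x
    rw [Submodule.mem_inf, mem_range_toEL, mem_range_toEL, mem_orth_range_toEL]
    constructor
    · rintro ⟨y, hy⟩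
      constructor
      · refine ⟨(Qᵀ - Qᵀ * G * (Gᵀ * (Q * Qᵀ) * G)⁻¹ * (Gᵀ * (Q * Qᵀ))) *ᵥ y, ?_⟩
        rw [Matrix.mulVec_mulVec, ← hy]
        rw [hP]
        simp [Matrix.mul_sub, Matrix.mul_assoc]
      · rw [← hy, Matrix.mulVec_mulVec, hQQG_T, hGQQP, Matrix.zero_mulVec]
    · rintro ⟨⟨z, hz⟩, hperp⟩
      refine ⟨x, ?_⟩
      have hQQx : (Q * Qᵀ) *ᵥ (x : Fin m → ℝ) = x := by
        rw [← hz, Matrix.mulVec_mulVec, Matrix.mul_assoc, hQ, Matrix.mul_one]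
      have hGx : (Gᵀ * (Q * Qᵀ)) *ᵥ (x : Fin m → ℝ) = 0 := by
        rw [← hQQG_T]; exact hperp
      rw [hP, Matrix.sub_mulVec, hQQx,
        show (Q * Qᵀ * G) * (Gᵀ * (Q * Qᵀ) * G)⁻¹ * (Gᵀ * (Q * Qᵀ)) =
          ((Q * Qᵀ * G) * (Gᵀ * (Q * Qᵀ) * G)⁻¹) * (Gᵀ * (Q * Qᵀ)) from by
            rw [Matrix.mul_assoc],
        ← Matrix.mulVec_mulVec, hGx, Matrix.mulVec_zero, sub_zero]
  -- ranks and dimensions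
  have hrU : U.rank = r := le_antisymm (Matrix.rank_le_width U)
    (by calc r = (1 : Matrix (Fin r) (Fin r) ℝ).rank := by rw [Matrix.rank_one]; simp
          _ = (Uᵀ * U).rank := by rw [hU]
          _ ≤ U.rank := Matrix.rank_mul_le_right _ _)
  have hrQ : Q.rank = m - r := le_antisymm (Matrix.rank_le_width Q)
    (by calc m - r = (1 : Matrix (Fin (m - r)) (Fin (m - r)) ℝ).rank := by rw [Matrix.rank_one]; simp
          _ = (Qᵀ * Q).rank := by rw [hQ]
          _ ≤ Q.rank := Matrix.rank_mul_le_right _ _)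
  have hrm : r ≤ m := hrU ▸ Matrix.rank_le_height U
  have hle : LinearMap.range (Matrix.toEuclideanLin Q) ≤
      (LinearMap.range (Matrix.toEuclideanLin U))ᗮ := by
    intro x hx
    rw [mem_range_toEL] at hx
    obtain ⟨z, hz⟩ := hx
    rw [mem_orth_range_toEL, ← hz, Matrix.mulVec_mulVec, hUQ, Matrix.zero_mulVec]
  have hdim : Module.finrank ℝ (LinearMap.range (Matrix.toEuclideanLin Q)) =
      Module.finrank ℝ ((LinearMap.range (Matrix.toEuclideanLin U))ᗮ) := by
    have h₁ := Submodule.finrank_add_finrank_orthogonal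
      (K := LinearMap.range (Matrix.toEuclideanLin U))
    rw [finrank_range_toEL, hrU] at h₁
    rw [finrank_range_toEL, hrQ]
    have h₂ : Module.finrank ℝ (EuclideanSpace ℝ (Fin m)) = m := by simp
    omega
  have hQU : LinearMap.range (Matrix.toEuclideanLin Q) =
      (LinearMap.range (Matrix.toEuclideanLin U))ᗮ :=
    Submodule.eq_of_le_of_finrank_eq hle hdim
  -- claim 4
  have hC4 : LinearMap.range (Matrix.toEuclideanLin Q) ⊓
      (LinearMap.range (Matrix.toEuclideanLin (Q * Qᵀ * G)))ᗮ =
      (LinearMap.range (Matrix.toEuclideanLin U) ⊔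
        LinearMap.range (Matrix.toEuclideanLin G))ᗮ := by
    rw [← Submodule.inf_orthogonal, ← hQU]
    ext x
    simp only [Submodule.mem_inf, mem_range_toEL, mem_orth_range_toEL]
    constructor
    · rintro ⟨⟨z, hz⟩, hperp⟩
      refine ⟨⟨z, hz⟩, ?_⟩
      have hQQx : (Q * Qᵀ) *ᵥ (x : Fin m → ℝ) = x := by
        rw [← hz, Matrix.mulVec_mulVec, Matrix.mul_assoc, hQ, Matrix.mul_one]
      rw [hQQG_T] at hperp
      calc Gᵀ *ᵥ (x : Fin m → ℝ) = Gᵀ *ᵥ ((Q * Qᵀ) *ᵥ (x : Fin m → ℝ)) := by rw [hQQx]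
        _ = (Gᵀ * (Q * Qᵀ)) *ᵥ (x : Fin m → ℝ) := Matrix.mulVec_mulVec _ _ _
        _ = 0 := hperp
    · rintro ⟨⟨z, hz⟩, hperp⟩
      refine ⟨⟨z, hz⟩, ?_⟩
      have hQQx : (Q * Qᵀ) *ᵥ (x : Fin m → ℝ) = x := by
        rw [← hz, Matrix.mulVec_mulVec, Matrix.mul_assoc, hQ, Matrix.mul_one]
      rw [hQQG_T]
      calc (Gᵀ * (Q * Qᵀ)) *ᵥ (x : Fin m → ℝ)
          = Gᵀ *ᵥ ((Q * Qᵀ) *ᵥ (x : Fin m → ℝ)) := (Matrix.mulVec_mulVec _ _ _).symm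
        _ = Gᵀ *ᵥ (x : Fin m → ℝ) := by rw [hQQx]
        _ = 0 := hperp
  exact ⟨hsym, hPP, hC3, hC4⟩
end

section
/- Let B ∈ ℝ^{m×r} have full column rank r with smallest singular value σ_min(B), and let N ∈ ℝ^{m×r} with spectral norm ‖N‖ < σ_min(B). Set Y = B + N. Then Y has full column rank and the orthogonal projections onto the column spaces satisfy ‖P_{R(Y)} − P_{R(B)}‖ ≤ ‖N‖ · 2(σ_max(B) + σ_min(B)) / (σ_min(B)·(σ_min(B) − ‖N‖)). -/
open Matrix

/-- Spectral (L2 operator) norm of a matrix. -/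
noncomputable def specNorm {m n : ℕ} (M : Matrix (Fin m) (Fin n) ℝ) : ℝ :=
  sSup {c | ∃ x : EuclideanSpace ℝ (Fin n), ‖x‖ = 1 ∧ ‖Matrix.toEuclideanLin M x‖ = c}

/-- Smallest singular value of a matrix. -/
noncomputable def sigmaMin {m n : ℕ} (M : Matrix (Fin m) (Fin n) ℝ) : ℝ :=
  sInf {c | ∃ x : EuclideanSpace ℝ (Fin n), ‖x‖ = 1 ∧ ‖Matrix.toEuclideanLin M x‖ = c}

/-- Largest singular value of a matrix. -/
noncomputable def sigmaMax {m n : ℕ} (M : Matrix (Fin m) (Fin n) ℝ) : ℝ :=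
  specNorm M

/-- Orthogonal projection onto the column space of a full-column-rank matrix. -/
noncomputable def proj {m n : ℕ} (M : Matrix (Fin m) (Fin n) ℝ) : Matrix (Fin m) (Fin m) ℝ :=
  M * (Mᵀ * M)⁻¹ * Mᵀ

open scoped Matrix.Norms.L2Operator

namespace Stmt10Aux

variable {m n k : ℕ}

noncomputable def T (M : Matrix (Fin m) (Fin n) ℝ) :
    EuclideanSpace ℝ (Fin n) →L[ℝ] EuclideanSpace ℝ (Fin m) :=
  LinearMap.toContinuousLinearMap (Matrix.toEuclideanLin M)

lemma T_apply (M : Matrix (Fin m) (Fin n) ℝ) (x : EuclideanSpace ℝ (Fin n)) :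
    T M x = Matrix.toEuclideanLin M x := rfl

lemma norm_T (M : Matrix (Fin m) (Fin n) ℝ) : ‖M‖ = ‖T M‖ := rfl

lemma apply_le_norm (M : Matrix (Fin m) (Fin n) ℝ) (x : EuclideanSpace ℝ (Fin n)) :
    ‖Matrix.toEuclideanLin M x‖ ≤ ‖M‖ * ‖x‖ := by
  rw [norm_T]; exact (T M).le_opNorm x

lemma norm_le_of_forall {M : Matrix (Fin m) (Fin n) ℝ} {c : ℝ} (hc : 0 ≤ c)
    (h : ∀ x : EuclideanSpace ℝ (Fin n), ‖Matrix.toEuclideanLin M x‖ ≤ c * ‖x‖) :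
    ‖M‖ ≤ c := by
  rw [norm_T]; exact ContinuousLinearMap.opNorm_le_bound _ hc fun x => h x

lemma specNorm_nonneg (M : Matrix (Fin m) (Fin n) ℝ) : 0 ≤ specNorm M := by
  apply Real.sSup_nonneg
  rintro c ⟨x, hx, rfl⟩
  positivity

lemma exists_unit [Nonempty (Fin n)] : ∃ x : EuclideanSpace ℝ (Fin n), ‖x‖ = 1 :=
  ⟨EuclideanSpace.single (Classical.arbitrary _) 1, by
    rw [EuclideanSpace.norm_single]; norm_num⟩

lemma specNorm_eq [Nonempty (Fin n)] (M : Matrix (Fin m) (Fin n) ℝ) : specNorm M = ‖M‖ := by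
  have hbdd : BddAbove {c | ∃ x : EuclideanSpace ℝ (Fin n), ‖x‖ = 1 ∧
      ‖Matrix.toEuclideanLin M x‖ = c} := by
    refine ⟨‖M‖, ?_⟩
    rintro c ⟨x, hx, rfl⟩
    simpa [hx] using apply_le_norm M x
  apply le_antisymm
  · apply Real.sSup_le ?_ (norm_nonneg _)
    rintro c ⟨x, hx, rfl⟩
    simpa [hx] using apply_le_norm M x
  · rw [norm_T]
    refine ContinuousLinearMap.opNorm_le_bound _ (specNorm_nonneg M) fun x => ?_
    rcases eq_or_ne x 0 with rfl | hx
    · simp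
    · have hxn : ‖x‖ ≠ 0 := norm_ne_zero_iff.2 hx
      have hmem : ‖Matrix.toEuclideanLin M (‖x‖⁻¹ • x)‖ ∈
          {c | ∃ x : EuclideanSpace ℝ (Fin n), ‖x‖ = 1 ∧ ‖Matrix.toEuclideanLin M x‖ = c} :=
        ⟨‖x‖⁻¹ • x, by simp [norm_smul, hxn], rfl⟩
      have hle := le_csSup hbdd hmem
      have hTx : Matrix.toEuclideanLin M x = ‖x‖ • Matrix.toEuclideanLin M (‖x‖⁻¹ • x) := by
        rw [_root_.map_smul, smul_smul, mul_inv_cancel₀ hxn, one_smul]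
      calc ‖T M x‖ = ‖x‖ * ‖Matrix.toEuclideanLin M (‖x‖⁻¹ • x)‖ := by
            rw [T_apply, hTx, norm_smul, norm_norm]
        _ ≤ ‖x‖ * specNorm M := mul_le_mul_of_nonneg_left hle (norm_nonneg x)
        _ = specNorm M * ‖x‖ := mul_comm _ _

lemma sigmaMin_nonneg (M : Matrix (Fin m) (Fin n) ℝ) : 0 ≤ sigmaMin M := by
  apply Real.sInf_nonneg
  rintro c ⟨x, hx, rfl⟩
  positivity

lemma sigmaMin_le_apply (M : Matrix (Fin m) (Fin n) ℝ) {x : EuclideanSpace ℝ (Fin n)}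
    (hx : ‖x‖ = 1) : sigmaMin M ≤ ‖Matrix.toEuclideanLin M x‖ :=
  csInf_le ⟨0, by rintro c ⟨z, hz, rfl⟩; positivity⟩ ⟨x, hx, rfl⟩

lemma sigmaMin_smul_le (M : Matrix (Fin m) (Fin n) ℝ) (x : EuclideanSpace ℝ (Fin n)) :
    sigmaMin M * ‖x‖ ≤ ‖Matrix.toEuclideanLin M x‖ := by
  rcases eq_or_ne x 0 with rfl | hx
  · simp
  · have hxn : ‖x‖ ≠ 0 := norm_ne_zero_iff.2 hx
    have h1 := sigmaMin_le_apply M (x := ‖x‖⁻¹ • x) (by simp [norm_smul, hxn])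
    have h2 : ‖Matrix.toEuclideanLin M (‖x‖⁻¹ • x)‖ = ‖x‖⁻¹ * ‖Matrix.toEuclideanLin M x‖ := by
      rw [_root_.map_smul, norm_smul]; simp
    rw [h2] at h1
    have h3 := mul_le_mul_of_nonneg_right h1 (norm_nonneg x)
    have h4 : ‖x‖⁻¹ * ‖Matrix.toEuclideanLin M x‖ * ‖x‖ = ‖Matrix.toEuclideanLin M x‖ := by
      field_simp
    rw [h4] at h3
    exact h3

lemma le_sigmaMin [Nonempty (Fin n)] (M : Matrix (Fin m) (Fin n) ℝ) {c : ℝ}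
    (h : ∀ x : EuclideanSpace ℝ (Fin n), ‖x‖ = 1 → c ≤ ‖Matrix.toEuclideanLin M x‖) :
    c ≤ sigmaMin M := by
  obtain ⟨u, hu⟩ := exists_unit (n := n)
  refine le_csInf ⟨‖Matrix.toEuclideanLin M u‖, u, hu, rfl⟩ ?_
  rintro b ⟨x, hx, rfl⟩
  exact h x hx

lemma toEuclideanLin_mul (A : Matrix (Fin m) (Fin n) ℝ) (B : Matrix (Fin n) (Fin k) ℝ)
    (x : EuclideanSpace ℝ (Fin k)) :
    Matrix.toEuclideanLin (A * B) x = Matrix.toEuclideanLin A (Matrix.toEuclideanLin B x) := by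
  simp [Matrix.toEuclideanLin_apply, Matrix.mulVec_mulVec]

lemma inner_transpose (A : Matrix (Fin m) (Fin n) ℝ) (y : EuclideanSpace ℝ (Fin m))
    (x : EuclideanSpace ℝ (Fin n)) :
    (inner ℝ (Matrix.toEuclideanLin Aᵀ y) x : ℝ) = inner ℝ y (Matrix.toEuclideanLin A x) := by
  rw [← Matrix.conjTranspose_eq_transpose_of_trivial,
    Matrix.toEuclideanLin_conjTranspose_eq_adjoint, LinearMap.adjoint_inner_left]

lemma isUnit_det {M : Matrix (Fin m) (Fin n) ℝ} (h : 0 < sigmaMin M) :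
    IsUnit (Mᵀ * M).det := by
  rw [isUnit_iff_ne_zero]
  intro hdet
  obtain ⟨v, hv, hMv⟩ := (Matrix.exists_mulVec_eq_zero_iff).2 hdet
  set x : EuclideanSpace ℝ (Fin n) := (WithLp.equiv 2 _).symm v with hxdef
  have hx0 : x ≠ 0 := by
    intro h0
    apply hv
    have := congrArg (WithLp.equiv 2 (Fin n → ℝ)) h0
    simpa [hxdef] using this
  have h1 : Matrix.toEuclideanLin (Mᵀ * M) x = 0 := by
    rw [hxdef, WithLp.equiv_symm_apply, Matrix.toEuclideanLin_apply_piLp_toLp, hMv, WithLp.toLp_zero]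
  have h2 : (inner ℝ (Matrix.toEuclideanLin M x) (Matrix.toEuclideanLin M x) : ℝ) = 0 := by
    rw [← inner_transpose, ← toEuclideanLin_mul, h1, inner_zero_left]
  have h3 : ‖Matrix.toEuclideanLin M x‖ = 0 := by
    rw [real_inner_self_eq_norm_sq] at h2
    nlinarith [norm_nonneg (Matrix.toEuclideanLin M x)]
  have h4 := sigmaMin_smul_le M x
  rw [h3] at h4
  have h5 : 0 < ‖x‖ := norm_pos_iff.2 hx0
  nlinarith

lemma rank_eq {M : Matrix (Fin m) (Fin n) ℝ} (h : 0 < sigmaMin M) : M.rank = n := by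
  have hinj : Function.Injective M.mulVecLin := by
    rw [← LinearMap.ker_eq_bot, LinearMap.ker_eq_bot']
    intro v hv
    set x : EuclideanSpace ℝ (Fin n) := (WithLp.equiv 2 _).symm v with hxdef
    have h1 : Matrix.toEuclideanLin M x = 0 := by
      rw [hxdef, WithLp.equiv_symm_apply, Matrix.toEuclideanLin_apply_piLp_toLp]
      rw [Matrix.mulVecLin_apply] at hv
      rw [hv, WithLp.toLp_zero]
    have h2 := sigmaMin_smul_le M x
    rw [h1, norm_zero] at h2
    have h3 : ‖x‖ = 0 := by nlinarith [norm_nonneg x]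
    have h4 : x = 0 := norm_eq_zero.1 h3
    have := congrArg (WithLp.equiv 2 (Fin n → ℝ)) h4
    simpa [hxdef] using this
  rw [Matrix.rank, LinearMap.finrank_range_of_inj hinj]
  simp

section ProjLemmas

variable {M : Matrix (Fin m) (Fin n) ℝ} (hu : IsUnit (Mᵀ * M).det)

include hu

lemma proj_mul : proj M * M = M := by
  rw [proj, Matrix.mul_assoc, Matrix.mul_assoc, Matrix.nonsing_inv_mul _ hu, Matrix.mul_one]

omit hu in
lemma proj_transpose : (proj M)ᵀ = proj M := by
  rw [proj, Matrix.transpose_mul, Matrix.transpose_mul, Matrix.transpose_nonsing_inv,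
    Matrix.transpose_mul, Matrix.transpose_transpose, Matrix.mul_assoc]

lemma proj_idem : proj M * proj M = proj M := by
  nth_rewrite 2 [proj]
  rw [← Matrix.mul_assoc, ← Matrix.mul_assoc, proj_mul hu, proj]

lemma one_sub_proj_transpose : (1 - proj M)ᵀ = 1 - proj M := by
  rw [Matrix.transpose_sub, Matrix.transpose_one, proj_transpose]

lemma one_sub_proj_idem : (1 - proj M) * (1 - proj M) = 1 - proj M := by
  rw [Matrix.mul_sub, Matrix.mul_one, Matrix.sub_mul, Matrix.one_mul, proj_idem hu,
    sub_self, sub_zero]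

end ProjLemmas

lemma symIdem_apply_norm_le {A : Matrix (Fin m) (Fin m) ℝ} (hs : Aᵀ = A) (hi : A * A = A)
    (y : EuclideanSpace ℝ (Fin m)) : ‖Matrix.toEuclideanLin A y‖ ≤ ‖y‖ := by
  have h1 : Matrix.toEuclideanLin Aᵀ (Matrix.toEuclideanLin A y) = Matrix.toEuclideanLin A y := by
    rw [← toEuclideanLin_mul, hs, hi]
  have key : ‖Matrix.toEuclideanLin A y‖ ^ 2 ≤ ‖Matrix.toEuclideanLin A y‖ * ‖y‖ := by
    calc ‖Matrix.toEuclideanLin A y‖ ^ 2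
        = (inner ℝ (Matrix.toEuclideanLin A y) (Matrix.toEuclideanLin A y) : ℝ) :=
          (real_inner_self_eq_norm_sq _).symm
      _ = (inner ℝ (Matrix.toEuclideanLin Aᵀ (Matrix.toEuclideanLin A y)) y : ℝ) := by
          rw [inner_transpose]
      _ = (inner ℝ (Matrix.toEuclideanLin A y) y : ℝ) := by rw [h1]
      _ ≤ ‖Matrix.toEuclideanLin A y‖ * ‖y‖ := real_inner_le_norm _ _
  rcases eq_or_lt_of_le (norm_nonneg (Matrix.toEuclideanLin A y)) with h0 | h0
  · exact h0 ▸ norm_nonneg y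
  · nlinarith

lemma symIdem_norm_le {A : Matrix (Fin m) (Fin m) ℝ} (hs : Aᵀ = A) (hi : A * A = A) :
    ‖A‖ ≤ 1 :=
  norm_le_of_forall zero_le_one fun y => by
    rw [one_mul]; exact symIdem_apply_norm_le hs hi y

lemma pinv_apply_le {M : Matrix (Fin m) (Fin n) ℝ} (h : 0 < sigmaMin M)
    (y : EuclideanSpace ℝ (Fin m)) :
    ‖Matrix.toEuclideanLin ((Mᵀ * M)⁻¹ * Mᵀ) y‖ ≤ (sigmaMin M)⁻¹ * ‖y‖ := by
  have hu := isUnit_det h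
  have hw : Matrix.toEuclideanLin M (Matrix.toEuclideanLin ((Mᵀ * M)⁻¹ * Mᵀ) y)
      = Matrix.toEuclideanLin (proj M) y := by
    rw [← toEuclideanLin_mul]
    congr 1
    rw [proj, Matrix.mul_assoc]
  have h1 : ‖Matrix.toEuclideanLin M (Matrix.toEuclideanLin ((Mᵀ * M)⁻¹ * Mᵀ) y)‖ ≤ ‖y‖ := by
    rw [hw]
    exact symIdem_apply_norm_le proj_transpose (proj_idem hu) y
  have h2 := sigmaMin_smul_le M (Matrix.toEuclideanLin ((Mᵀ * M)⁻¹ * Mᵀ) y)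
  have h3 := h2.trans h1
  rw [← mul_le_mul_iff_right₀ h, ← mul_assoc, mul_inv_cancel₀ (ne_of_gt h), one_mul]
  exact h3

lemma pinv_norm_le {M : Matrix (Fin m) (Fin n) ℝ} (h : 0 < sigmaMin M) :
    ‖(Mᵀ * M)⁻¹ * Mᵀ‖ ≤ (sigmaMin M)⁻¹ :=
  norm_le_of_forall (inv_nonneg.2 h.le) (pinv_apply_le h)

end Stmt10Aux

open Stmt10Aux

set_option maxHeartbeats 1000000 in
theorem stmt10 {m r : ℕ} (B N : Matrix (Fin m) (Fin r) ℝ)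
    (hB : B.rank = r) (hN : specNorm N < sigmaMin B) :
    (B + N).rank = r ∧
      specNorm (proj (B + N) - proj B) ≤
        specNorm N * (2 * (sigmaMax B + sigmaMin B)) /
          (sigmaMin B * (sigmaMin B - specNorm N)) := by
  classical
  rcases Nat.eq_zero_or_pos r with hr | hr
  · subst hr
    exfalso
    have hempty : ∀ M : Matrix (Fin m) (Fin 0) ℝ,
        {c | ∃ x : EuclideanSpace ℝ (Fin 0), ‖x‖ = 1 ∧ ‖Matrix.toEuclideanLin M x‖ = c} = ∅ := by
      intro M
      rw [Set.eq_empty_iff_forall_notMem]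
      rintro c ⟨x, hx, -⟩
      rw [EuclideanSpace.norm_eq] at hx
      simp at hx
    have h1 : specNorm N = 0 := by rw [specNorm, hempty N, Real.sSup_empty]
    have h2 : sigmaMin B = 0 := by rw [sigmaMin, hempty B, Real.sInf_empty]
    rw [h1, h2] at hN
    exact lt_irrefl 0 hN
  haveI : Nonempty (Fin r) := ⟨⟨0, hr⟩⟩
  have hν0 : 0 ≤ specNorm N := specNorm_nonneg N
  have hσpos : 0 < sigmaMin B := lt_of_le_of_lt hν0 hN
  rcases Nat.eq_zero_or_pos m with hm | hm
  · exfalso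
    subst hm
    obtain ⟨u, hu⟩ := exists_unit (n := r)
    have h1 : sigmaMin B ≤ ‖Matrix.toEuclideanLin B u‖ := sigmaMin_le_apply B hu
    have h2 : ‖Matrix.toEuclideanLin B u‖ = 0 := by
      rw [EuclideanSpace.norm_eq]
      simp
    rw [h2] at h1
    linarith
  haveI : Nonempty (Fin m) := ⟨⟨0, hm⟩⟩
  set Y := B + N with hY
  set ν := specNorm N with hν
  set σ := sigmaMin B with hσ
  have hνeq : ν = ‖N‖ := hν.trans (specNorm_eq N)
  have hσY : σ - ν ≤ sigmaMin Y := by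
    apply le_sigmaMin
    intro x hx
    have h1 : σ ≤ ‖Matrix.toEuclideanLin B x‖ := sigmaMin_le_apply B hx
    have h2 : ‖Matrix.toEuclideanLin N x‖ ≤ ν := by
      rw [hνeq]
      simpa [hx] using apply_le_norm N x
    have h3 : Matrix.toEuclideanLin B x =
        Matrix.toEuclideanLin Y x - Matrix.toEuclideanLin N x := by
      rw [hY, map_add]
      simp
    have h4 : ‖Matrix.toEuclideanLin B x‖ ≤
        ‖Matrix.toEuclideanLin Y x‖ + ‖Matrix.toEuclideanLin N x‖ := by
      rw [h3]
      exact norm_sub_le _ _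
    linarith
  have hσνpos : 0 < σ - ν := by rw [hν, hσ]; linarith
  have hσYpos : 0 < sigmaMin Y := lt_of_lt_of_le hσνpos hσY
  have huB : IsUnit (Bᵀ * B).det := isUnit_det hσpos
  have huY : IsUnit (Yᵀ * Y).det := isUnit_det hσYpos
  refine ⟨rank_eq hσYpos, ?_⟩
  rw [specNorm_eq]
  -- key matrix identities
  have hYid1 : (1 - proj B) * Y = (1 - proj B) * N := by
    rw [hY, Matrix.mul_add, Matrix.sub_mul, Matrix.one_mul, proj_mul huB, sub_self, zero_add]
  have hB' : B = Y - N := by rw [hY]; abel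
  have hYid2 : (1 - proj Y) * B = -((1 - proj Y) * N) := by
    have h0 : (1 - proj Y) * Y = 0 := by
      rw [Matrix.sub_mul, Matrix.one_mul, proj_mul huY, sub_self]
    rw [hB', Matrix.mul_sub, h0, zero_sub]
  have hid1 : (1 - proj B) * proj Y = ((1 - proj B) * N) * ((Yᵀ * Y)⁻¹ * Yᵀ) := by
    rw [← hYid1]
    simp only [proj, Matrix.mul_assoc]
  have hid2 : (1 - proj Y) * proj B = (-((1 - proj Y) * N)) * ((Bᵀ * B)⁻¹ * Bᵀ) := by
    rw [← hYid2]
    simp only [proj, Matrix.mul_assoc]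
  -- transpose trick for the first term
  have e1 : ‖proj Y * (1 - proj B)‖ = ‖(1 - proj B) * proj Y‖ := by
    have hct : ((1 - proj B) * proj Y)ᴴ = proj Y * (1 - proj B) := by
      rw [Matrix.conjTranspose_eq_transpose_of_trivial, Matrix.transpose_mul,
        proj_transpose, one_sub_proj_transpose huB]
    rw [← Matrix.l2_opNorm_conjTranspose ((1 - proj B) * proj Y), hct]
  have hterm1 : ‖proj Y * (1 - proj B)‖ ≤ ν * (sigmaMin Y)⁻¹ := by
    rw [e1, hid1]
    calc ‖((1 - proj B) * N) * ((Yᵀ * Y)⁻¹ * Yᵀ)‖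
        ≤ ‖(1 - proj B) * N‖ * ‖(Yᵀ * Y)⁻¹ * Yᵀ‖ := Matrix.l2_opNorm_mul _ _
      _ ≤ (‖(1 : Matrix (Fin m) (Fin m) ℝ) - proj B‖ * ‖N‖) * (sigmaMin Y)⁻¹ := by
          apply mul_le_mul (Matrix.l2_opNorm_mul _ _) (pinv_norm_le hσYpos) (norm_nonneg _)
          positivity
      _ ≤ (1 * ‖N‖) * (sigmaMin Y)⁻¹ := by
          gcongr
          exact symIdem_norm_le (one_sub_proj_transpose huB) (one_sub_proj_idem huB)
      _ = ν * (sigmaMin Y)⁻¹ := by rw [one_mul, hνeq]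
  have hterm2 : ‖(1 - proj Y) * proj B‖ ≤ ν * σ⁻¹ := by
    rw [hid2, Matrix.neg_mul, norm_neg]
    calc ‖((1 - proj Y) * N) * ((Bᵀ * B)⁻¹ * Bᵀ)‖
        ≤ ‖(1 - proj Y) * N‖ * ‖(Bᵀ * B)⁻¹ * Bᵀ‖ := Matrix.l2_opNorm_mul _ _
      _ ≤ (‖(1 : Matrix (Fin m) (Fin m) ℝ) - proj Y‖ * ‖N‖) * σ⁻¹ := by
          apply mul_le_mul (Matrix.l2_opNorm_mul _ _) (pinv_norm_le hσpos) (norm_nonneg _)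
          positivity
      _ ≤ (1 * ‖N‖) * σ⁻¹ := by
          gcongr
          exact symIdem_norm_le (one_sub_proj_transpose huY) (one_sub_proj_idem huY)
      _ = ν * σ⁻¹ := by rw [one_mul, hνeq]
  have hid : proj Y - proj B = proj Y * (1 - proj B) - (1 - proj Y) * proj B := by
    noncomm_ring
  have hsmax : 0 ≤ sigmaMax B := by rw [sigmaMax]; exact specNorm_nonneg B
  have hmain : ‖proj Y - proj B‖ ≤ ν * (σ - ν)⁻¹ + ν * σ⁻¹ := by
    calc ‖proj Y - proj B‖ ≤ ‖proj Y * (1 - proj B)‖ + ‖(1 - proj Y) * proj B‖ := by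
          rw [hid]; exact norm_sub_le _ _
      _ ≤ ν * (sigmaMin Y)⁻¹ + ν * σ⁻¹ := add_le_add hterm1 hterm2
      _ ≤ ν * (σ - ν)⁻¹ + ν * σ⁻¹ := by
          have hinv : (sigmaMin Y)⁻¹ ≤ (σ - ν)⁻¹ := by
            apply inv_anti₀ hσνpos hσY
          have := mul_le_mul_of_nonneg_left hinv hν0
          linarith
  refine hmain.trans ?_
  have heq : ν * (σ - ν)⁻¹ + ν * σ⁻¹ = ν * (σ + (σ - ν)) / (σ * (σ - ν)) := by
    field_simp
  rw [heq]
  rw [div_le_div_iff₀ (by positivity) (by positivity)]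
  have hνle : 0 ≤ ν := hν0
  nlinarith [mul_nonneg hνle hsmax, mul_pos hσpos hσνpos, mul_nonneg (mul_nonneg hνle hsmax) (mul_pos hσpos hσνpos).le, mul_nonneg hνle hνle]
  done
end

section
/- Let r ≤ k < m be positive integers and A ∈ ℝ^{m×k} with singular values σ₁(A) ≥ ⋯ ≥ σ_k(A) ≥ 0. Then for any r-dimensional subspace W of the column space R(A), the Frobenius norm satisfies ‖Aᵀ·P_W‖_F² ≥ σ_{k-r+1}(A)² + σ_{k-r+2}(A)² + ⋯ + σ_k(A)², where P_W is the orthogonal projection onto W. -/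
open Matrix Finset

-- Abel-summation style lemma
lemma abel_ineq {k r : ℕ} (hr : 0 < r) (hrk : r ≤ k) (a q : Fin k → ℝ)
    (ha : Antitone a) (ha0 : ∀ j, 0 ≤ a j) (hq0 : ∀ j, 0 ≤ q j) (hq1 : ∀ j, q j ≤ 1)
    (hsum : ∑ j, q j = r) :
    (∑ j : Fin k, if k - r ≤ (j : ℕ) then a j else 0) ≤ ∑ j, a j * q j := by
  have hk : 0 < k := lt_of_lt_of_le hr hrk
  set t : Fin k := ⟨k - r, by omega⟩ with ht
  have hpred : ∀ j : Fin k, (k - r ≤ (j : ℕ)) ↔ t ≤ j := by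
    intro j; simp [ht, Fin.le_def]
  have hS : (univ.filter (fun j : Fin k => k - r ≤ (j : ℕ))) = Finset.Ici t := by
    ext j; simp only [Finset.mem_filter, Finset.mem_Ici, Finset.mem_univ, true_and]
    exact hpred j
  have hcard : (Finset.Ici t).card = r := by
    rw [Fin.card_Ici]; simp [ht]; omega
  have hLHS : (∑ j : Fin k, if k - r ≤ (j : ℕ) then a j else 0)
      = ∑ j ∈ Finset.Ici t, a j := by
    rw [← hS, Finset.sum_filter]
  rw [hLHS]
  have hsplit : ∑ j, a j * q j
      = ∑ j ∈ Finset.Ici t, a j * q j + ∑ j ∈ (Finset.Ici t)ᶜ, a j * q j := by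
    rw [Finset.sum_add_sum_compl]
  have hqsplit : ∑ j ∈ Finset.Ici t, q j + ∑ j ∈ (Finset.Ici t)ᶜ, q j = r := by
    rw [Finset.sum_add_sum_compl, hsum]
  have key : ∑ j ∈ Finset.Ici t, a j * (1 - q j) ≤ ∑ j ∈ (Finset.Ici t)ᶜ, a j * q j := by
    calc ∑ j ∈ Finset.Ici t, a j * (1 - q j)
        ≤ ∑ j ∈ Finset.Ici t, a t * (1 - q j) := by
          apply Finset.sum_le_sum
          intro j hj
          have hjt : t ≤ j := by simpa using hj
          exact mul_le_mul_of_nonneg_right (ha hjt) (by linarith [hq1 j])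
      _ = a t * ∑ j ∈ (Finset.Ici t)ᶜ, q j := by
          rw [← Finset.mul_sum, Finset.sum_sub_distrib, Finset.sum_const, hcard]
          have : ∑ j ∈ (Finset.Ici t)ᶜ, q j = r - ∑ j ∈ Finset.Ici t, q j := by
            linarith [hqsplit]
          rw [this]; ring_nf
      _ = ∑ j ∈ (Finset.Ici t)ᶜ, a t * q j := by rw [Finset.mul_sum]
      _ ≤ ∑ j ∈ (Finset.Ici t)ᶜ, a j * q j := by
          apply Finset.sum_le_sum
          intro j hj
          have hjt : j ≤ t := by
            simp [Finset.mem_compl, Finset.mem_Ici] at hj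
            exact le_of_lt hj
          exact mul_le_mul_of_nonneg_right (ha hjt) (hq0 j)
  have hexp : ∑ j ∈ Finset.Ici t, a j
      = ∑ j ∈ Finset.Ici t, a j * q j + ∑ j ∈ Finset.Ici t, a j * (1 - q j) := by
    rw [← Finset.sum_add_distrib]; apply Finset.sum_congr rfl; intro j _; ring
  rw [hexp, hsplit]
  linarith

theorem stmt12 {m k r : ℕ} (hr : 0 < r) (hrk : r ≤ k) (hkm : k < m)
    (A : Matrix (Fin m) (Fin k) ℝ)
    (σ : Fin k → ℝ) (hσnonneg : ∀ j, 0 ≤ σ j) (hσmono : Antitone σ)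
    (U : Matrix (Fin m) (Fin k) ℝ) (V : Matrix (Fin k) (Fin k) ℝ)
    (hU : Uᵀ * U = 1) (hV : Vᵀ * V = 1)
    (hsvd : A = U * Matrix.diagonal σ * Vᵀ)
    (W : Submodule ℝ (EuclideanSpace ℝ (Fin m)))
    (hWA : W ≤ LinearMap.range (Matrix.toEuclideanLin A))
    (hWdim : Module.finrank ℝ W = r)
    (P : Matrix (Fin m) (Fin m) ℝ) (hPsym : P.IsSymm) (hPidem : P * P = P)
    (hPrange : LinearMap.range (Matrix.toEuclideanLin P) = W) :
    (∑ j : Fin k, if k - r ≤ (j : ℕ) then σ j ^ 2 else 0) ≤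
      ∑ i, ∑ j, ((Aᵀ * P) i j) ^ 2 := by
  classical
  have hPt : Pᵀ = P := hPsym
  have h1 : U * Uᵀ * U = U := by rw [Matrix.mul_assoc, hU, Matrix.mul_one]
  have hUUA : U * Uᵀ * A = A := by
    rw [hsvd]
    calc U * Uᵀ * (U * Matrix.diagonal σ * Vᵀ)
        = (U * Uᵀ * U) * Matrix.diagonal σ * Vᵀ := by simp only [Matrix.mul_assoc]
      _ = U * Matrix.diagonal σ * Vᵀ := by rw [h1]
  -- U Uᵀ P = P
  have hUUP : U * Uᵀ * P = P := by
    have hrange : ∀ x : EuclideanSpace ℝ (Fin m),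
        ∃ y, Matrix.toEuclideanLin A y = Matrix.toEuclideanLin P x := by
      intro x
      have hx : Matrix.toEuclideanLin P x ∈ W := hPrange ▸ LinearMap.mem_range_self _ x
      exact hWA hx
    have hmv : ∀ x : Fin m → ℝ, (U * Uᵀ * P) *ᵥ x = P *ᵥ x := by
      intro x
      obtain ⟨y, hy⟩ := hrange ((WithLp.equiv 2 _).symm x)
      have hy' : A *ᵥ ((WithLp.equiv 2 (Fin k → ℝ)) y) = P *ᵥ x := by
        have h2 := congrArg (WithLp.equiv 2 (Fin m → ℝ)) hy
        simpa [Matrix.toEuclideanLin_apply] using h2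
      calc (U * Uᵀ * P) *ᵥ x = (U * Uᵀ) *ᵥ (P *ᵥ x) := by rw [← Matrix.mulVec_mulVec]
        _ = (U * Uᵀ) *ᵥ (A *ᵥ ((WithLp.equiv 2 (Fin k → ℝ)) y)) := by rw [hy']
        _ = (U * Uᵀ * A) *ᵥ ((WithLp.equiv 2 (Fin k → ℝ)) y) := by rw [Matrix.mulVec_mulVec]
        _ = A *ᵥ ((WithLp.equiv 2 (Fin k → ℝ)) y) := by rw [hUUA]
        _ = P *ᵥ x := hy'
    have : Matrix.toLin' (U * Uᵀ * P) = Matrix.toLin' P :=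
      LinearMap.ext fun x => by rw [Matrix.toLin'_apply, Matrix.toLin'_apply]; exact hmv x
    exact Matrix.toLin'.injective this
  -- trace P = r
  have hf : Matrix.toEuclideanLin P ∘ₗ Matrix.toEuclideanLin P = Matrix.toEuclideanLin P := by
    have hcomp : Matrix.toEuclideanLin (P * P)
        = Matrix.toEuclideanLin P ∘ₗ Matrix.toEuclideanLin P := by
      rw [Matrix.toEuclideanLin_eq_toLin]
      exact Matrix.toLin_mul _ _ _ P P
    rw [← hcomp, hPidem]
  have hproj : LinearMap.IsProj W (Matrix.toEuclideanLin P) := by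
    constructor
    · intro x; rw [← hPrange]; exact LinearMap.mem_range_self _ x
    · intro x hx
      rw [← hPrange] at hx
      obtain ⟨y, hy⟩ := hx
      rw [← hy, ← LinearMap.comp_apply, hf]
  have htr : LinearMap.trace ℝ _ (Matrix.toEuclideanLin P) = (r : ℝ) := by
    rw [hproj.trace, hWdim]
  have htrP : Matrix.trace P = (r : ℝ) := by
    have hb := LinearMap.trace_eq_matrix_trace ℝ (PiLp.basisFun 2 ℝ (Fin m))
      (Matrix.toEuclideanLin P)
    rw [Matrix.toEuclideanLin_eq_toLin, LinearMap.toMatrix_toLin] at hb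
    rw [← hb]; exact htr
  -- diagonal entries of Q
  have hQ1 : (P * U)ᵀ * (P * U) = Uᵀ * P * U := by
    rw [Matrix.transpose_mul, hPt, ← Matrix.mul_assoc, Matrix.mul_assoc Uᵀ P P, hPidem]
  have hPPU : P * (P * U) = P * U := by rw [← Matrix.mul_assoc, hPidem]
  have h1Q : (U - P * U)ᵀ * (U - P * U) = 1 - Uᵀ * P * U := by
    rw [Matrix.transpose_sub, Matrix.transpose_mul, hPt, Matrix.sub_mul, Matrix.mul_sub,
      Matrix.mul_sub, hU, Matrix.mul_assoc Uᵀ P (P * U), hPPU, ← Matrix.mul_assoc Uᵀ P U]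
    abel
  have hQ0 : ∀ j, 0 ≤ (Uᵀ * P * U) j j := by
    intro j
    rw [← hQ1]
    have : ((P * U)ᵀ * (P * U)) j j = ∑ i, ((P * U) i j) ^ 2 := by
      simp [Matrix.mul_apply, sq, mul_comm]
    rw [this]
    exact Finset.sum_nonneg fun i _ => sq_nonneg _
  have hQle1 : ∀ j, (Uᵀ * P * U) j j ≤ 1 := by
    intro j
    have h2 : (0:ℝ) ≤ ((1 : Matrix (Fin k) (Fin k) ℝ) - Uᵀ * P * U) j j := by
      rw [← h1Q]
      have : ((U - P * U)ᵀ * (U - P * U)) j j = ∑ i, ((U - P * U) i j) ^ 2 := by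
        simp [Matrix.mul_apply, sq, mul_comm]
      rw [this]
      exact Finset.sum_nonneg fun i _ => sq_nonneg _
    have h3 : ((1 : Matrix (Fin k) (Fin k) ℝ) - Uᵀ * P * U) j j = 1 - (Uᵀ * P * U) j j := by
      simp [Matrix.sub_apply, Matrix.one_apply_eq]
    linarith [h2, h3]
  have hQtr : ∑ j, (Uᵀ * P * U) j j = (r : ℝ) := by
    have : Matrix.trace (Uᵀ * P * U) = (r : ℝ) := by
      rw [Matrix.trace_mul_cycle, hUUP, htrP]
    simpa [Matrix.trace, Matrix.diag] using this
  -- RHS as trace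
  have hRHS : ∑ i, ∑ j, ((Aᵀ * P) i j) ^ 2
      = Matrix.trace ((Aᵀ * P) * (Aᵀ * P)ᵀ) := by
    simp [Matrix.trace, Matrix.mul_apply, Matrix.diag, sq, mul_comm]
  have hMMt : (Aᵀ * P) * (Aᵀ * P)ᵀ = Aᵀ * P * A := by
    rw [Matrix.transpose_mul, hPt, Matrix.transpose_transpose, ← Matrix.mul_assoc,
      Matrix.mul_assoc Aᵀ P P, hPidem]
  have hAt : Aᵀ = V * Matrix.diagonal σ * Uᵀ := by
    rw [hsvd]
    simp [Matrix.transpose_mul, Matrix.diagonal_transpose, Matrix.mul_assoc]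
  have hArr : Aᵀ * P * A
      = V * (Matrix.diagonal σ * (Uᵀ * P * U) * Matrix.diagonal σ) * Vᵀ := by
    rw [hAt, hsvd]; simp only [Matrix.mul_assoc]
  have htrV : Matrix.trace (V * (Matrix.diagonal σ * (Uᵀ * P * U) * Matrix.diagonal σ) * Vᵀ)
      = Matrix.trace (Matrix.diagonal σ * (Uᵀ * P * U) * Matrix.diagonal σ) := by
    rw [Matrix.trace_mul_cycle, ← Matrix.mul_assoc, hV, Matrix.one_mul]
  have hdq : Matrix.trace (Matrix.diagonal σ * (Uᵀ * P * U) * Matrix.diagonal σ)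
      = ∑ j, σ j ^ 2 * (Uᵀ * P * U) j j := by
    simp only [Matrix.trace, Matrix.diag]
    refine Finset.sum_congr rfl fun j _ => ?_
    rw [Matrix.mul_diagonal, Matrix.diagonal_mul]; ring
  have hfinal : ∑ i, ∑ j, ((Aᵀ * P) i j) ^ 2 = ∑ j, σ j ^ 2 * (Uᵀ * P * U) j j := by
    rw [hRHS, hMMt, hArr, htrV, hdq]
  rw [hfinal]
  exact abel_ineq hr hrk (fun j => σ j ^ 2) (fun j => (Uᵀ * P * U) j j)
    (fun i j hij => pow_le_pow_left₀ (hσnonneg j) (hσmono hij) 2)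
    (fun j => sq_nonneg _) hQ0 hQle1 hQtr
end

section
/- Let X ∈ ℝ^{n×r} have exactly k nonzero rows which are in general position (any r of them are linearly independent), with r ≤ k. Then every nonzero vector x in the column space R(X) satisfies ‖x‖₀ ≥ k − r + 1. -/
open Matrix

/-- Support (set of nonzero coordinates) of a vector. -/
noncomputable def vecSupp {n : ℕ} (x : Fin n → ℝ) : Finset (Fin n) :=
  @Finset.filter _ (fun i => x i ≠ 0) (Classical.decPred _) Finset.univ

theorem stmt14 {n r k : ℕ} (hrk : r ≤ k)
    (X : Matrix (Fin n) (Fin r) ℝ) (hk : (rowSupp X).card = k)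
    (hgenrows : ∀ Z : Finset (Fin n), Z ⊆ rowSupp X → Z.card = r →
      LinearIndependent ℝ (fun i : {i // i ∈ Z} => X i.1)) :
    ∀ c : Fin r → ℝ, X.mulVec c ≠ 0 → k - r + 1 ≤ (vecSupp (X.mulVec c)).card := by
  intro c hc
  set S := rowSupp X with hS
  set T := vecSupp (X.mulVec c) with hT
  -- T ⊆ S
  have hTS : T ⊆ S := by
    intro i hi
    simp only [hT, vecSupp, Finset.mem_filter, Finset.mem_univ, true_and] at hi
    simp only [hS, rowSupp, Finset.mem_filter, Finset.mem_univ, true_and]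
    intro hX0
    apply hi
    simp [Matrix.mulVec, dotProduct, hX0]
  -- r ≥ 1
  have hr1 : 1 ≤ r := by
    rcases Nat.eq_zero_or_pos r with h0 | h
    · exfalso; apply hc; funext i
      subst h0
      simp [Matrix.mulVec, dotProduct]
    · exact h
  -- The set of zero coordinates inside S has card < r
  have hsdiff : (S \ T).card < r := by
    by_contra h
    push_neg at h
    obtain ⟨Z', hZ'sub, hZ'card⟩ := Finset.exists_subset_card_eq h
    have hZ'S : Z' ⊆ S := hZ'sub.trans (Finset.sdiff_subset)
    have hli := hgenrows Z' hZ'S hZ'card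
    -- rows X i for i ∈ Z' form a basis of (Fin r → ℝ)
    have hcard : Fintype.card {i // i ∈ Z'} = Module.finrank ℝ (Fin r → ℝ) := by
      simp [hZ'card]
    haveI : Nonempty {i // i ∈ Z'} := by
      have : Z'.Nonempty := Finset.card_pos.mp (by omega)
      exact ⟨⟨this.choose, this.choose_spec⟩⟩
    let B := basisOfLinearIndependentOfCardEqFinrank hli hcard
    have hB : ∀ i, (B i : Fin r → ℝ) = X i.1 := fun i =>
      congrFun (coe_basisOfLinearIndependentOfCardEqFinrank hli hcard) i
    -- the linear functional v ↦ v ⬝ᵥ c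
    let φ : (Fin r → ℝ) →ₗ[ℝ] ℝ :=
      { toFun := fun v => v ⬝ᵥ c
        map_add' := fun u v => add_dotProduct u v c
        map_smul' := fun a v => smul_dotProduct a v c }
    have hφ0 : φ = 0 := by
      apply B.ext
      intro i
      have hiz : (i : Fin n) ∈ S \ T := hZ'sub i.2
      have : X.mulVec c i.1 = 0 := by
        have := (Finset.mem_sdiff.mp hiz).2
        simp only [hT, vecSupp, Finset.mem_filter, Finset.mem_univ, true_and, not_not] at this
        exact this
      simp only [φ, LinearMap.coe_mk, AddHom.coe_mk, hB, LinearMap.zero_apply]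
      simpa [Matrix.mulVec] using this
    have hc0 : c = 0 := by
      funext j
      have := LinearMap.congr_fun hφ0 (Pi.single j 1)
      simpa [φ, dotProduct, Pi.single_apply] using this
    exact hc (by simp [hc0])
  have hcard : (S \ T).card = S.card - T.card := Finset.card_sdiff_of_subset hTS
  have hTle : T.card ≤ S.card := Finset.card_le_card hTS
  omega
end
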